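/- Let Y_{ij} and Y_{il} (same row i, different columns j ≠ l) be conditionally independent Poisson variables with rates ∑_k θ_{ik}β_{jk} and ∑_k θ_{ik}β_{lk} respectively, where all θ's and β's are mutually independent with the θ's having mean μ_θ, variance σ_θ² and the β's mean μ_β, variance σ_β². Then Cov[Y_{ij}, Y_{il}] = K·μ_β²·σ_θ². -/

import Mathlib

open MeasureTheory ProbabilityTheory Real
open scoped ENNReal NNReal

lemma poisson_lintegral_id (r : ℝ≥0) :
    ∫⁻ n, (n : ℝ≥0∞) ∂poissonMeasure r = (r : ℝ≥0∞) := by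
  have hsum : HasSum (fun n : ℕ => (n : ℝ) * poissonPMFReal r n) r := by
    have h0 : HasSum (fun n : ℕ => (r : ℝ) * poissonPMFReal r n) r := by
      simpa [poissonPMFReal] using (poissonPMFRealSum r).mul_left (r : ℝ)
    have heq : (fun n : ℕ => ((n + 1 : ℕ) : ℝ) * poissonPMFReal r (n + 1))
        = fun n : ℕ => (r : ℝ) * poissonPMFReal r n := by
      funext n
      have hfac : ((n + 1).factorial : ℝ) = (n + 1 : ℝ) * n.factorial := by
        push_cast [Nat.factorial_succ]; ring
      have hne : (n.factorial : ℝ) ≠ 0 := by positivity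
      simp only [poissonPMFReal, hfac]
      field_simp
      push_cast; ring
    have h1 : HasSum (fun n : ℕ => ((n + 1 : ℕ) : ℝ) * poissonPMFReal r (n + 1)) r := by
      rw [heq]; exact h0
    have := (hasSum_nat_add_iff (f := fun n : ℕ => (n : ℝ) * poissonPMFReal r n) 1).mp h1
    simpa using this
  have : ∫⁻ n, (n : ℝ≥0∞) ∂poissonMeasure r
      = ∑' n : ℕ, (n : ℝ≥0∞) * poissonPMF r n := by
    rw [poissonMeasure, lintegral_countable']
    congr 1; funext n
    rw [Measure.sum_smul_dirac_singleton]; rfl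
  rw [this]
  have h2 : ∀ n : ℕ, (n : ℝ≥0∞) * poissonPMF r n
      = ENNReal.ofReal ((n : ℝ) * poissonPMFReal r n) := by
    intro n
    have hp : poissonPMF r n = ENNReal.ofReal (poissonPMFReal r n) := rfl
    rw [hp, ENNReal.ofReal_mul (by positivity), ENNReal.ofReal_natCast]
  simp_rw [h2]
  rw [← ENNReal.ofReal_tsum_of_nonneg (fun n => mul_nonneg (Nat.cast_nonneg n)
    poissonPMFReal_nonneg) hsum.summable, hsum.tsum_eq]
  simp

lemma cond_reduction {Ω : Type*} [MeasureSpace Ω] [IsProbabilityMeasure (ℙ : Measure Ω)]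
    (X : Ω → ℝ × ℝ) (Z : Ω → ℕ × ℕ) (hX : Measurable X) (hZ : Measurable Z)
    (g : ℕ × ℕ → ℝ≥0∞) (hg : Measurable g) :
    ∫⁻ ω, g (Z ω) ∂ℙ = ∫⁻ ω, ∫⁻ y, g y ∂(condDistrib Z X ℙ (X ω)) ∂ℙ := by
  have h1 : (ℙ : Measure Ω).map (fun ω => (X ω, Z ω))
      = ((ℙ : Measure Ω).map X).compProd (condDistrib Z X ℙ) := by
    exact (compProd_map_condDistrib hZ.aemeasurable).symm
  have hmeas : Measurable fun a : ℝ × ℝ => ∫⁻ y, g y ∂(condDistrib Z X ℙ a) :=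
    Measurable.lintegral_kernel hg
  calc ∫⁻ ω, g (Z ω) ∂ℙ
      = ∫⁻ p : (ℝ × ℝ) × (ℕ × ℕ), g p.2 ∂((ℙ : Measure Ω).map (fun ω => (X ω, Z ω))) := by
        rw [lintegral_map (f := fun p : (ℝ × ℝ) × (ℕ × ℕ) => g p.2) (hg.comp measurable_snd)
          (hX.prodMk hZ)]
    _ = ∫⁻ a, ∫⁻ y, g y ∂(condDistrib Z X ℙ a) ∂((ℙ : Measure Ω).map X) := by
        rw [h1, Measure.lintegral_compProd (f := fun p : (ℝ × ℝ) × (ℕ × ℕ) => g p.2)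
          (hg.comp measurable_snd)]
    _ = ∫⁻ ω, ∫⁻ y, g y ∂(condDistrib Z X ℙ (X ω)) ∂ℙ := by
        rw [lintegral_map hmeas hX]


/-- Same-row covariance in Poisson matrix factorization: if `Y₁, Y₂` are conditionally
independent Poisson variables with rates `∑_k θ_k β_k` and `∑_k θ_k β'_k` (shared row
factors `θ`, distinct column factors `β, β'`), with all latent variables mutually
independent, then `Cov[Y₁, Y₂] = K μβ² σθ²`. -/
theorem pmf_same_row_covariance {Ω : Type*} [MeasureSpace Ω]
    [IsProbabilityMeasure (ℙ : Measure Ω)] (K : ℕ) (θ β β' : Fin K → Ω → ℝ)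
    (Y₁ Y₂ : Ω → ℕ) (μθ μβ σθ σβ : ℝ)
    (hθmeas : ∀ k, Measurable (θ k)) (hβmeas : ∀ k, Measurable (β k))
    (hβ'meas : ∀ k, Measurable (β' k)) (hY₁meas : Measurable Y₁) (hY₂meas : Measurable Y₂)
    (hθnonneg : ∀ k ω, 0 ≤ θ k ω) (hβnonneg : ∀ k ω, 0 ≤ β k ω)
    (hβ'nonneg : ∀ k ω, 0 ≤ β' k ω)
    (hθL : ∀ k, MemLp (θ k) 2 ℙ) (hβL : ∀ k, MemLp (β k) 2 ℙ)
    (hβ'L : ∀ k, MemLp (β' k) 2 ℙ)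
    (hindep : iIndepFun (m := fun _ => Real.measurableSpace)
      (Sum.elim θ (Sum.elim β β')) ℙ)
    (hμθ : ∀ k, (∫ ω, θ k ω) = μθ) (hσθ : ∀ k, variance (θ k) ℙ = σθ^2)
    (hμβ : ∀ k, (∫ ω, β k ω) = μβ) (hσβ : ∀ k, variance (β k) ℙ = σβ^2)
    (hμβ' : ∀ k, (∫ ω, β' k ω) = μβ) (hσβ' : ∀ k, variance (β' k) ℙ = σβ^2)
    (hcond : ∀ᵐ ω ∂ℙ,
      condDistrib (fun ω' => (Y₁ ω', Y₂ ω'))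
          (fun ω' => (∑ k, θ k ω' * β k ω', ∑ k, θ k ω' * β' k ω')) ℙ
          (∑ k, θ k ω * β k ω, ∑ k, θ k ω * β' k ω) =
        (poissonMeasure (∑ k, θ k ω * β k ω).toNNReal).prod
          (poissonMeasure (∑ k, θ k ω * β' k ω).toNNReal)) :
    (∫ ω, (Y₁ ω : ℝ) * (Y₂ ω : ℝ)) - (∫ ω, (Y₁ ω : ℝ)) * (∫ ω, (Y₂ ω : ℝ)) =
      K * (μβ^2 * σθ^2) := by
  classical
  set L₁ : Ω → ℝ := fun ω => ∑ k, θ k ω * β k ω with hL₁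
  set L₂ : Ω → ℝ := fun ω => ∑ k, θ k ω * β' k ω with hL₂
  have hL₁meas : Measurable L₁ := Finset.measurable_sum _ fun k _ => (hθmeas k).mul (hβmeas k)
  have hL₂meas : Measurable L₂ := Finset.measurable_sum _ fun k _ => (hθmeas k).mul (hβ'meas k)
  have hL₁nonneg : ∀ ω, 0 ≤ L₁ ω := fun ω =>
    Finset.sum_nonneg fun k _ => mul_nonneg (hθnonneg k ω) (hβnonneg k ω)
  have hL₂nonneg : ∀ ω, 0 ≤ L₂ ω := fun ω =>
    Finset.sum_nonneg fun k _ => mul_nonneg (hθnonneg k ω) (hβ'nonneg k ω)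
  have hXm : Measurable fun ω => (L₁ ω, L₂ ω) := hL₁meas.prodMk hL₂meas
  have hZm : Measurable fun ω => (Y₁ ω, Y₂ ω) := hY₁meas.prodMk hY₂meas
  -- the key conditional reduction
  have key : ∀ g : ℕ × ℕ → ℝ≥0∞, Measurable g →
      ∫⁻ ω, g (Y₁ ω, Y₂ ω) ∂ℙ = ∫⁻ ω, ∫⁻ y, g y
        ∂((poissonMeasure (L₁ ω).toNNReal).prod (poissonMeasure (L₂ ω).toNNReal)) ∂ℙ := by
    intro g hg
    rw [cond_reduction (fun ω => (L₁ ω, L₂ ω)) (fun ω => (Y₁ ω, Y₂ ω)) hXm hZm g hg]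
    refine lintegral_congr_ae (hcond.mono fun ω hω => ?_)
    simp only [hL₁, hL₂]
    rw [hω]
  have hcoe : Measurable (fun n : ℕ => (n : ℝ≥0∞)) := Measurable.of_discrete
  have hcoeR : Measurable (fun n : ℕ => (n : ℝ)) := Measurable.of_discrete
  -- Poisson product means
  have hmean1 : ∀ ω, ∫⁻ y : ℕ × ℕ, (y.1 : ℝ≥0∞)
      ∂((poissonMeasure (L₁ ω).toNNReal).prod (poissonMeasure (L₂ ω).toNNReal))
      = ENNReal.ofReal (L₁ ω) := by
    intro ω
    have := lintegral_prod_mul (μ := poissonMeasure (L₁ ω).toNNReal)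
      (ν := poissonMeasure (L₂ ω).toNNReal)
      (f := fun n : ℕ => (n : ℝ≥0∞)) (g := fun _ : ℕ => 1)
      (hcoe.aemeasurable) aemeasurable_const
    simp only [mul_one, lintegral_one, measure_univ] at this
    rw [this, poisson_lintegral_id]
    rfl
  have hmean2 : ∀ ω, ∫⁻ y : ℕ × ℕ, (y.2 : ℝ≥0∞)
      ∂((poissonMeasure (L₁ ω).toNNReal).prod (poissonMeasure (L₂ ω).toNNReal))
      = ENNReal.ofReal (L₂ ω) := by
    intro ω
    have := lintegral_prod_mul (μ := poissonMeasure (L₁ ω).toNNReal)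
      (ν := poissonMeasure (L₂ ω).toNNReal)
      (f := fun _ : ℕ => 1) (g := fun n : ℕ => (n : ℝ≥0∞))
      aemeasurable_const (hcoe.aemeasurable)
    simp only [one_mul, lintegral_one, measure_univ] at this
    rw [this, poisson_lintegral_id]
    rfl
  have hmean12 : ∀ ω, ∫⁻ y : ℕ × ℕ, (y.1 : ℝ≥0∞) * (y.2 : ℝ≥0∞)
      ∂((poissonMeasure (L₁ ω).toNNReal).prod (poissonMeasure (L₂ ω).toNNReal))
      = ENNReal.ofReal (L₁ ω * L₂ ω) := by
    intro ω
    rw [lintegral_prod_mul (hcoe.aemeasurable)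
      (hcoe.aemeasurable), poisson_lintegral_id, poisson_lintegral_id,
      ENNReal.ofReal_mul (hL₁nonneg ω)]
    rfl
  -- convert the three Bochner integrals to integrals of the rates
  have hy12 : (∫ ω, (Y₁ ω : ℝ) * (Y₂ ω : ℝ)) = ∫ ω, L₁ ω * L₂ ω := by
    rw [integral_eq_lintegral_of_nonneg_ae (f := fun ω => (Y₁ ω : ℝ) * (Y₂ ω : ℝ))
        (ae_of_all _ fun ω => by positivity)
        (((hcoeR.comp hY₁meas).mul (hcoeR.comp hY₂meas)).aestronglyMeasurable),
      integral_eq_lintegral_of_nonneg_ae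
        (ae_of_all _ fun ω => mul_nonneg (hL₁nonneg ω) (hL₂nonneg ω))
        ((hL₁meas.mul hL₂meas).aestronglyMeasurable)]
    congr 1
    have hg : Measurable fun y : ℕ × ℕ => (y.1 : ℝ≥0∞) * (y.2 : ℝ≥0∞) :=
      (hcoe.comp measurable_fst).mul (hcoe.comp measurable_snd)
    have hk := key _ hg
    simp_rw [hmean12] at hk
    rw [← hk]
    congr 1; funext ω
    rw [ENNReal.ofReal_mul (by positivity), ENNReal.ofReal_natCast, ENNReal.ofReal_natCast]
  have hy1 : (∫ ω, (Y₁ ω : ℝ)) = ∫ ω, L₁ ω := by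
    rw [integral_eq_lintegral_of_nonneg_ae (f := fun ω => (Y₁ ω : ℝ))
        (ae_of_all _ fun ω => by positivity)
        ((hcoeR.comp hY₁meas).aestronglyMeasurable),
      integral_eq_lintegral_of_nonneg_ae (ae_of_all _ fun ω => hL₁nonneg ω)
        hL₁meas.aestronglyMeasurable]
    congr 1
    have hk := key (fun y : ℕ × ℕ => (y.1 : ℝ≥0∞)) (hcoe.comp measurable_fst)
    simp_rw [hmean1] at hk
    rw [← hk]
    congr 1; funext ω
    rw [ENNReal.ofReal_natCast]
  have hy2 : (∫ ω, (Y₂ ω : ℝ)) = ∫ ω, L₂ ω := by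
    rw [integral_eq_lintegral_of_nonneg_ae (f := fun ω => (Y₂ ω : ℝ))
        (ae_of_all _ fun ω => by positivity)
        ((hcoeR.comp hY₂meas).aestronglyMeasurable),
      integral_eq_lintegral_of_nonneg_ae (ae_of_all _ fun ω => hL₂nonneg ω)
        hL₂meas.aestronglyMeasurable]
    congr 1
    have hk := key (fun y : ℕ × ℕ => (y.2 : ℝ≥0∞)) (hcoe.comp measurable_snd)
    simp_rw [hmean2] at hk
    rw [← hk]
    congr 1; funext ω
    rw [ENNReal.ofReal_natCast]
  -- independence computations
  have hFmeas : ∀ i, Measurable (Sum.elim θ (Sum.elim β β') i) := by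
    rintro (k | k | k)
    · exact hθmeas k
    · exact hβmeas k
    · exact hβ'meas k
  have hIθ : ∀ k, Integrable (θ k) ℙ := fun k => (hθL k).integrable one_le_two
  have hIβ : ∀ k, Integrable (β k) ℙ := fun k => (hβL k).integrable one_le_two
  have hIβ' : ∀ k, Integrable (β' k) ℙ := fun k => (hβ'L k).integrable one_le_two
  have hββ'ind : ∀ k l : Fin K, IndepFun (β k) (β' l) ℙ := fun k l =>
    hindep.indepFun (i := Sum.inr (Sum.inl k)) (j := Sum.inr (Sum.inr l)) (by simp)
  have hββ'int : ∀ k l, Integrable (β k * β' l) ℙ := fun k l =>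
    (hββ'ind k l).integrable_mul (hIβ k) (hIβ' l)
  have hθθint : ∀ k l, Integrable (θ k * θ l) ℙ := by
    intro k l
    by_cases hkl : k = l
    · subst hkl
      have h := (hθL k).integrable_sq
      have he : (θ k * θ k) = fun ω => θ k ω ^ 2 := by funext ω; simp [Pi.mul_apply, sq]
      rw [he]; exact h
    · exact (hindep.indepFun (i := Sum.inl k) (j := Sum.inl l)
        (by simp [hkl])).integrable_mul (hIθ k) (hIθ l)
  have hIndθθββ : ∀ k l : Fin K, IndepFun (θ k * θ l) (β k * β' l) ℙ := fun k l =>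
    hindep.indepFun_mul_mul hFmeas (Sum.inl k) (Sum.inl l) (Sum.inr (Sum.inl k))
      (Sum.inr (Sum.inr l)) (by simp) (by simp) (by simp) (by simp)
  have hterm_int : ∀ k l, Integrable (fun ω => (θ k ω * θ l ω) * (β k ω * β' l ω)) ℙ := by
    intro k l
    exact (hIndθθββ k l).integrable_mul (hθθint k l) (hββ'int k l)
  have hββ'val : ∀ k l, (∫ ω, β k ω * β' l ω) = μβ * μβ := by
    intro k l
    have h := (hββ'ind k l).integral_fun_mul_eq_mul_integral
      (hβmeas k).aestronglyMeasurable (hβ'meas l).aestronglyMeasurable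
    have h2 : (∫ ω, β k ω * β' l ω) = (∫ ω, β k ω) * ∫ ω, β' l ω := h
    rw [h2, hμβ k, hμβ' l]
  have hθθval : ∀ k l, (∫ ω, θ k ω * θ l ω) = if k = l then σθ^2 + μθ^2 else μθ^2 := by
    intro k l
    by_cases hkl : k = l
    · subst hkl
      rw [if_pos rfl]
      have hv := variance_eq_sub (hθL k)
      rw [hσθ k] at hv
      have h2 : (∫ ω, (θ k ^ 2) ω) = ∫ ω, θ k ω * θ k ω := by
        congr 1; funext ω; simp [sq]
      rw [h2, hμθ k] at hv
      linarith
    · simp only [if_neg hkl]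
      have h := (hindep.indepFun (i := Sum.inl k) (j := Sum.inl l)
        (by simp [hkl])).integral_fun_mul_eq_mul_integral
        (hθmeas k).aestronglyMeasurable (hθmeas l).aestronglyMeasurable
      have h2 : (∫ ω, θ k ω * θ l ω) = (∫ ω, θ k ω) * ∫ ω, θ l ω := h
      rw [h2, hμθ k, hμθ l, sq]
  have hTval : ∀ k l, (∫ ω, (θ k ω * θ l ω) * (β k ω * β' l ω))
      = (if k = l then σθ^2 + μθ^2 else μθ^2) * (μβ * μβ) := by
    intro k l
    have h := (hIndθθββ k l).integral_fun_mul_eq_mul_integral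
      ((hθmeas k).mul (hθmeas l)).aestronglyMeasurable ((hβmeas k).mul (hβ'meas l)).aestronglyMeasurable
    have h2 : (∫ ω, (θ k ω * θ l ω) * (β k ω * β' l ω))
        = (∫ ω, θ k ω * θ l ω) * ∫ ω, β k ω * β' l ω := h
    rw [h2, hθθval k l, hββ'val k l]
  -- expand the product of the rates
  have hexp : (∫ ω, L₁ ω * L₂ ω)
      = ∑ k : Fin K, ∑ l : Fin K, ∫ ω, (θ k ω * θ l ω) * (β k ω * β' l ω) := by
    have hpt : ∀ ω, L₁ ω * L₂ ω
        = ∑ k : Fin K, ∑ l : Fin K, (θ k ω * θ l ω) * (β k ω * β' l ω) := by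
      intro ω
      rw [hL₁, hL₂]
      rw [Finset.sum_mul_sum]
      exact Finset.sum_congr rfl fun k _ => Finset.sum_congr rfl fun l _ => by ring
    simp_rw [hpt]
    rw [integral_finset_sum _ fun k _ => integrable_finset_sum _ fun l _ => hterm_int k l]
    exact Finset.sum_congr rfl fun k _ => integral_finset_sum _ fun l _ => hterm_int k l
  have hsum : (∫ ω, L₁ ω * L₂ ω)
      = K * (K * (μθ^2 * (μβ * μβ)) + σθ^2 * (μβ * μβ)) := by
    rw [hexp]
    have hval : ∀ k l : Fin K, (∫ ω, (θ k ω * θ l ω) * (β k ω * β' l ω))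
        = μθ^2 * (μβ * μβ) + (if k = l then σθ^2 * (μβ * μβ) else 0) := by
      intro k l
      rw [hTval k l]
      split <;> ring
    simp_rw [hval, Finset.sum_add_distrib, Finset.sum_ite_eq, Finset.mem_univ, if_true,
      Finset.sum_const, Finset.card_univ, Fintype.card_fin, nsmul_eq_mul]
    ring
  have hθβval : ∀ k : Fin K, (∫ ω, θ k ω * β k ω) = μθ * μβ := by
    intro k
    have h := (hindep.indepFun (i := Sum.inl k) (j := Sum.inr (Sum.inl k))
      (by simp)).integral_fun_mul_eq_mul_integral
      (hθmeas k).aestronglyMeasurable (hβmeas k).aestronglyMeasurable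
    have h2 : (∫ ω, θ k ω * β k ω) = (∫ ω, θ k ω) * ∫ ω, β k ω := h
    rw [h2, hμθ k, hμβ k]
  have hθβ'val : ∀ k : Fin K, (∫ ω, θ k ω * β' k ω) = μθ * μβ := by
    intro k
    have h := (hindep.indepFun (i := Sum.inl k) (j := Sum.inr (Sum.inr k))
      (by simp)).integral_fun_mul_eq_mul_integral
      (hθmeas k).aestronglyMeasurable (hβ'meas k).aestronglyMeasurable
    have h2 : (∫ ω, θ k ω * β' k ω) = (∫ ω, θ k ω) * ∫ ω, β' k ω := h
    rw [h2, hμθ k, hμβ' k]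
  have hθβint : ∀ k, Integrable (fun ω => θ k ω * β k ω) ℙ := by
    intro k
    have := ((hindep.indepFun (i := Sum.inl k) (j := Sum.inr (Sum.inl k))
      (by simp))).integrable_mul (hIθ k) (hIβ k)
    exact this
  have hθβ'int : ∀ k, Integrable (fun ω => θ k ω * β' k ω) ℙ := by
    intro k
    have := ((hindep.indepFun (i := Sum.inl k) (j := Sum.inr (Sum.inr k))
      (by simp))).integrable_mul (hIθ k) (hIβ' k)
    exact this
  have hL₁val : (∫ ω, L₁ ω) = K * (μθ * μβ) := by
    rw [hL₁]
    rw [integral_finset_sum _ fun k _ => hθβint k]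
    simp_rw [hθβval]
    simp [Finset.sum_const, Finset.card_univ, Fintype.card_fin, nsmul_eq_mul]
  have hL₂val : (∫ ω, L₂ ω) = K * (μθ * μβ) := by
    rw [hL₂]
    rw [integral_finset_sum _ fun k _ => hθβ'int k]
    simp_rw [hθβ'val]
    simp [Finset.sum_const, Finset.card_univ, Fintype.card_fin, nsmul_eq_mul]
  rw [hy12, hy1, hy2, hsum, hL₁val, hL₂val]
  ring
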